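/- Let X be a conjugacy class of involutions in the semidirect product G̃ = Z ⋊ W, let x = (a, u) and y = (b, v) be elements of X, and let X̂ be the conjugacy class of a in W (so that b ∈ X̂ as well). If x and y are joined by a path in the commuting involution graph C(G̃, X), then a and b are joined by a path in C(W, X̂) and the graph distance satisfies d(a, b) ≤ d(x, y). -/

import Mathlib

/-- The semidirect product `Z ⋊ W`, where the group `W` acts on the right on the additive
abelian group `Z` by additive automorphisms (the right action is encoded as a homomorphism
from the multiplicative opposite of `W`).  Elements are pairs `(a, u)` with `a ∈ W`, `u ∈ Z`,
and multiplication is given by `(a, u) * (b, v) = (a * b, u ^ b + v)`, where `u ^ b` denotes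
the action of `b` on `u`. -/
@[ext]
structure SDP {W Z : Type*} [Group W] [AddCommGroup Z] (φ : Wᵐᵒᵖ →* Multiplicative (AddAut Z)) where
  /-- the `W`-component -/
  w : W
  /-- the `Z`-component -/
  z : Z

namespace SDP

variable {W Z : Type*} [Group W] [AddCommGroup Z] {φ : Wᵐᵒᵖ →* Multiplicative (AddAut Z)}

instance : Mul (SDP φ) := ⟨fun x y => ⟨x.w * y.w, Multiplicative.toAdd (φ (MulOpposite.op y.w)) x.z + y.z⟩⟩
instance : One (SDP φ) := ⟨⟨1, 0⟩⟩
instance : Inv (SDP φ) := ⟨fun x => ⟨x.w⁻¹, -(Multiplicative.toAdd (φ (MulOpposite.op x.w⁻¹)) x.z)⟩⟩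

@[simp] theorem mul_w (x y : SDP φ) : (x * y).w = x.w * y.w := rfl
@[simp] theorem mul_z (x y : SDP φ) : (x * y).z = Multiplicative.toAdd (φ (MulOpposite.op y.w)) x.z + y.z := rfl
@[simp] theorem one_w : (1 : SDP φ).w = 1 := rfl
@[simp] theorem one_z : (1 : SDP φ).z = 0 := rfl
@[simp] theorem inv_w (x : SDP φ) : x⁻¹.w = x.w⁻¹ := rfl
@[simp] theorem inv_z (x : SDP φ) : x⁻¹.z = -(Multiplicative.toAdd (φ (MulOpposite.op x.w⁻¹)) x.z) := rfl

instance : Group (SDP φ) where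
  mul_assoc x y z := by
    ext
    · simp [mul_assoc]
    · simp only [mul_z, mul_w, map_add]
      rw [← AddAut.add_apply, ← toAdd_mul, ← map_mul, ← MulOpposite.op_mul, add_assoc]
  one_mul x := by ext <;> simp
  mul_one x := by ext <;> simp
  inv_mul_cancel x := by
    ext
    · simp
    · simp only [mul_z, inv_w, inv_z, mul_w, inv_mul_cancel, one_z, map_neg]
      rw [← AddAut.add_apply, ← toAdd_mul, ← map_mul, ← MulOpposite.op_mul]
      simp

end SDP

/-- The commuting involution graph on a set `X` of elements of a group `G`: the vertices are
the elements of `X`, and two distinct vertices are adjacent iff they commute in `G`. -/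
def commGraph (G : Type*) [Group G] (X : Set G) : SimpleGraph X where
  Adj x y := (x : G) ≠ (y : G) ∧ (x : G) * y = (y : G) * x
  symm := ⟨fun x y h => ⟨h.1.symm, h.2.symm⟩⟩
  loopless := ⟨fun x h => h.1 rfl⟩

/-- Let X be a conjugacy class of involutions in the semidirect product
G-tilde = Z ⋊ W, let x = (a, u) and y = (b, v) be elements of X, and let X-hat be the
conjugacy class of a in W (so that b ∈ X-hat as well).  If x and y are joined by a path in
the commuting involution graph C(G-tilde, X), then a and b are joined by a path in
C(W, X-hat) and the graph distance satisfies d(a, b) ≤ d(x, y). -/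
theorem stmt0 {W Z : Type*} [Group W] [AddCommGroup Z] (φ : Wᵐᵒᵖ →* Multiplicative (AddAut Z))
    (x₀ : SDP φ) (hx₀ : orderOf x₀ = 2)
    (X : Set (SDP φ)) (hX : X = {y | IsConj x₀ y})
    (x y : SDP φ) (hx : x ∈ X) (hy : y ∈ X)
    (Xhat : Set W) (hXhat : Xhat = {c | IsConj x.w c})
    (ha : x.w ∈ Xhat) (hb : y.w ∈ Xhat)
    (hreach : (commGraph (SDP φ) X).Reachable ⟨x, hx⟩ ⟨y, hy⟩) :
    (commGraph W Xhat).Reachable ⟨x.w, ha⟩ ⟨y.w, hb⟩ ∧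
      (commGraph W Xhat).dist ⟨x.w, ha⟩ ⟨y.w, hb⟩ ≤
        (commGraph (SDP φ) X).dist ⟨x, hx⟩ ⟨y, hy⟩ := by
  have hmem : ∀ g ∈ X, g.w ∈ Xhat := by
    intro g hg
    rw [hX] at hg hx
    obtain ⟨c, hc⟩ := isConj_iff.mp ((hx.symm.trans hg : IsConj x g))
    rw [hXhat]
    exact isConj_iff.mpr ⟨c.w, by
      have := congrArg SDP.w hc
      simpa using this⟩
  have key : ∀ {u v : X} (p : (commGraph (SDP φ) X).Walk u v),
      ∃ q : (commGraph W Xhat).Walk ⟨u.val.w, hmem _ u.2⟩ ⟨v.val.w, hmem _ v.2⟩,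
        q.length ≤ p.length := by
    intro u v p
    induction p with
    | nil => exact ⟨.nil, le_refl _⟩
    | @cons u v w h p ih =>
      obtain ⟨q, hq⟩ := ih
      by_cases hw : u.val.w = v.val.w
      · have hveq : (⟨u.val.w, hmem _ u.2⟩ : Xhat) = ⟨v.val.w, hmem _ v.2⟩ :=
          Subtype.ext hw
        rw [hveq]
        exact ⟨q, le_trans hq (by simp)⟩
      · have hcomm : u.val.w * v.val.w = v.val.w * u.val.w := by
          have := congrArg SDP.w h.2
          simpa using this
        exact ⟨SimpleGraph.Walk.cons ⟨hw, hcomm⟩ q, by rw [SimpleGraph.Walk.length_cons]; exact Nat.succ_le_succ hq⟩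
  obtain ⟨p, hp⟩ := hreach.exists_walk_length_eq_dist
  obtain ⟨q, hq⟩ := key p
  exact ⟨q.reachable, le_trans (SimpleGraph.dist_le q) (hq.trans (le_of_eq hp))⟩
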